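/- Let E be a complete locally convex Hausdorff space and f : ℝ^d → E continuous. If for every continuous seminorm p on E the function p ∘ f is Lebesgue integrable, then f has a Pettis integral, i.e., there exists e ∈ E with ⟨φ, e⟩ = ∫_{ℝ^d} ⟨φ, f(x)⟩ dx for all φ ∈ E'. Moreover p(e) ≤ ∫ p(f(x)) dx for every continuous seminorm p. -/

import Mathlib

set_option linter.unusedSectionVars false
set_option maxHeartbeats 1000000

open MeasureTheory Set Filter Topology Metric Bornology Uniformity

section Part0
variable {E : Type*} [AddCommGroup E] [Module ℝ E]

lemma seminorm_sum_le (p : Seminorm ℝ E) {ι : Type*} (s : Finset ι) (g : ι → E) :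
    p (∑ i ∈ s, g i) ≤ ∑ i ∈ s, p (g i) :=
  Finset.le_sum_of_subadditive p (map_zero p).le (map_add_le_add p) s g

end Part0

section Part1

variable {E : Type*} [AddCommGroup E] [Module ℝ E]
    [UniformSpace E] [IsUniformAddGroup E] [ContinuousSMul ℝ E]
    [LocallyConvexSpace ℝ E]

lemma exists_seminorm_subset_nhds {V : Set E} (hV : V ∈ 𝓝 (0:E)) :
    ∃ p : Seminorm ℝ E, ∃ r : ℝ, 0 < r ∧ Continuous ⇑p ∧ ∀ x : E, p x < r → x ∈ V := by
  have : IsTopologicalAddGroup E := inferInstance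
  have hws : WithSeminorms (gaugeSeminormFamily ℝ E) := with_gaugeSeminormFamily
  rcases hws.hasBasis.mem_iff.mp hV with ⟨U, hU, hUV⟩
  rcases (SeminormFamily.basisSets_iff _).mp hU with ⟨s, r, hr, rfl⟩
  set q := s.sup (gaugeSeminormFamily ℝ E) with hq
  have hball : q.ball 0 r ∈ 𝓝 (0:E) := hws.hasBasis.mem_of_mem hU
  have hqc : Continuous ⇑q :=
    Seminorm.continuous' (r := r) (mem_of_superset hball (q.ball_subset_closedBall 0 r))
  refine ⟨q, r, hr, hqc, fun x hx => hUV ?_⟩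
  simpa using (Seminorm.mem_ball_zero _).mpr hx

lemma cauchySeq_of_forall_seminorm {u : ℕ → E}
    (h : ∀ (p : Seminorm ℝ E), Continuous ⇑p → ∀ ε : ℝ, 0 < ε →
      ∃ N, ∀ k ≥ N, ∀ l ≥ N, p (u k - u l) < ε) :
    CauchySeq u := by
  rw [_root_.cauchySeq_iff]
  intro V hV
  rw [uniformity_eq_comap_nhds_zero E, mem_comap] at hV
  obtain ⟨W, hW, hWV⟩ := hV
  obtain ⟨p, r, hr, hpc, hpW⟩ := exists_seminorm_subset_nhds hW
  obtain ⟨N, hN⟩ := h p hpc r hr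
  refine ⟨N, fun k hk l hl => hWV ?_⟩
  have : p (u l - u k) < r := by rw [map_sub_rev]; exact hN k hk l hl
  exact hpW _ this

lemma seminorm_unifCont {X : Type*} [MetricSpace X] {K : Set X} (hK : IsCompact K)
    {g : X → E} (hg : Continuous g) (p : Seminorm ℝ E) (hp : Continuous ⇑p) {ε : ℝ} (hε : 0 < ε) :
    ∃ δ > 0, ∀ x ∈ K, ∀ y ∈ K, dist x y < δ → p (g x - g y) < ε := by
  have hUC : UniformContinuousOn g K := hK.uniformContinuousOn_of_continuous hg.continuousOn
  have hU : {q : E × E | p (q.2 - q.1) < ε} ∈ 𝓤 E := by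
    rw [uniformity_eq_comap_nhds_zero E]
    have ho : IsOpen {x : E | p x < ε} := isOpen_lt hp continuous_const
    exact mem_comap.mpr ⟨{x : E | p x < ε}, ho.mem_nhds (by simp [hε]), fun q hq => hq⟩
  have h2 := hUC hU
  rw [mem_map, mem_inf_principal] at h2
  obtain ⟨δ, hδ, hd⟩ := Metric.mem_uniformity_dist.mp h2
  refine ⟨δ, hδ, fun x hx y hy hxy => ?_⟩
  have := hd hxy (⟨hx, hy⟩ : (x, y) ∈ K ×ˢ K)
  rwa [map_sub_rev]

end Part1

section Part2

variable {d : ℕ}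

structure Prt (A : Set (EuclideanSpace ℝ (Fin d))) (δ : ℝ) where
  n : ℕ
  c : ℕ → EuclideanSpace ℝ (Fin d)
  S : ℕ → Set (EuclideanSpace ℝ (Fin d))
  meas : ∀ i, MeasurableSet (S i)
  disj : Pairwise (Function.onFun Disjoint S)
  iUnion_eq : (⋃ i, S i) = A
  mem_ball : ∀ i, ∀ x ∈ S i, dist x (c i) < δ
  c_mem : ∀ i, (S i).Nonempty → c i ∈ closure A
  eq_empty : ∀ i, n ≤ i → S i = ∅

lemma exists_prt {A : Set (EuclideanSpace ℝ (Fin d))} (hA : MeasurableSet A)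
    (hAb : IsBounded A) {δ : ℝ} (hδ : 0 < δ) : Nonempty (Prt A δ) := by
  classical
  set K := closure A with hK
  have hKc : IsCompact K := hAb.isCompact_closure
  have hcover : K ⊆ ⋃ x : K, ball (x : EuclideanSpace ℝ (Fin d)) δ := fun a ha =>
    mem_iUnion.mpr ⟨⟨a, ha⟩, mem_ball_self hδ⟩
  obtain ⟨t, ht⟩ := hKc.elim_finite_subcover _ (fun x : K => isOpen_ball) hcover
  set L := t.toList with hL
  set c : ℕ → EuclideanSpace ℝ (Fin d) := fun i =>
    if h : i < L.length then ((L.get ⟨i, h⟩ : K) : EuclideanSpace ℝ (Fin d)) else 0 with hc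
  set B : ℕ → Set (EuclideanSpace ℝ (Fin d)) := fun i =>
    if i < L.length then A ∩ ball (c i) δ else ∅ with hB
  have hBm : ∀ i, MeasurableSet (B i) := by
    intro i
    by_cases h : i < L.length <;> simp [hB, h, hA.inter measurableSet_ball]
  have hBsub : ∀ i, B i ⊆ A := by
    intro i x hx
    by_cases h : i < L.length
    · simp only [hB, if_pos h] at hx; exact hx.1
    · simp [hB, if_neg h] at hx
  have hBU : (⋃ i, B i) = A := by
    apply subset_antisymm (iUnion_subset hBsub)
    intro a ha
    have haK : a ∈ K := subset_closure ha
    obtain ⟨x, hxt, hax⟩ := mem_iUnion₂.mp (ht haK)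
    obtain ⟨j, hj⟩ := List.mem_iff_get.mp ((Finset.mem_toList).mpr hxt)
    refine mem_iUnion.mpr ⟨j.1, ?_⟩
    have hjl : j.1 < L.length := j.2
    have hcj : c j.1 = (x : EuclideanSpace ℝ (Fin d)) := by
      simp only [hc, dif_pos hjl]
      rw [show (⟨j.1, hjl⟩ : Fin L.length) = j from Fin.ext rfl]
      exact congrArg _ hj
    simp only [hB, if_pos hjl, hcj]
    exact ⟨ha, hax⟩
  refine ⟨⟨L.length, c, disjointed B, fun i => MeasurableSet.disjointed hBm i,
    disjoint_disjointed B, by rw [iUnion_disjointed, hBU], ?_, ?_, ?_⟩⟩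
  · intro i x hx
    have hx' : x ∈ B i := disjointed_subset B i hx
    by_cases h : i < L.length
    · simp only [hB, if_pos h] at hx'
      exact mem_ball.mp hx'.2
    · simp [hB, if_neg h] at hx'
  · rintro i ⟨x, hx⟩
    have hx' : x ∈ B i := disjointed_subset B i hx
    by_cases h : i < L.length
    · simp only [hc, dif_pos h]
      exact (L.get ⟨i, h⟩).2
    · simp [hB, if_neg h] at hx'
  · intro i hi
    have : B i = ∅ := by simp [hB, not_lt.mpr hi]
    exact eq_empty_of_subset_empty (this ▸ disjointed_subset B i)

end Part2

section Part3
variable {E : Type*} [AddCommGroup E] [Module ℝ E]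
variable {A : Set (EuclideanSpace ℝ (Fin d))} {δ δ' : ℝ}

lemma Prt.subset (P : Prt A δ) (i : ℕ) : P.S i ⊆ A := by
  intro x hx
  rw [← P.iUnion_eq]
  exact mem_iUnion.mpr ⟨i, hx⟩

lemma vol_ne_top (hAb : IsBounded A) : volume A ≠ ⊤ :=
  ((measure_mono subset_closure).trans_lt hAb.isCompact_closure.measure_lt_top).ne

lemma Prt.vol_decomp (P : Prt A δ) (Q : Prt A δ') (i : ℕ) :
    volume (P.S i) = ∑ j ∈ Finset.range Q.n, volume (P.S i ∩ Q.S j) := by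
  have h1 : P.S i = ⋃ j, P.S i ∩ Q.S j := by
    rw [← inter_iUnion, Q.iUnion_eq]
    exact (inter_eq_left.mpr (P.subset i)).symm
  conv_lhs => rw [h1]
  rw [measure_iUnion
    (fun a b hab => ((Q.disj hab).mono inter_subset_right inter_subset_right))
    (fun j => (P.meas i).inter (Q.meas j))]
  exact tsum_eq_sum fun j hj => by
    simp [Q.eq_empty j (Nat.le_of_not_gt (fun h => hj (Finset.mem_range.mpr h)))]

lemma Prt.vol_total (P : Prt A δ) :
    volume A = ∑ i ∈ Finset.range P.n, volume (P.S i) := by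
  conv_lhs => rw [← P.iUnion_eq]
  rw [measure_iUnion P.disj P.meas]
  exact tsum_eq_sum fun i hi => by
    simp [P.eq_empty i (Nat.le_of_not_gt (fun h => hi (Finset.mem_range.mpr h)))]

lemma Prt.integral_decomp (P : Prt A δ) {g : EuclideanSpace ℝ (Fin d) → ℝ}
    (hg : IntegrableOn g A) :
    ∫ x in A, g x = ∑ i ∈ Finset.range P.n, ∫ x in P.S i, g x := by
  have hg' : IntegrableOn g (⋃ i, P.S i) := by rwa [P.iUnion_eq]
  have := integral_iUnion P.meas P.disj hg'
  rw [P.iUnion_eq] at this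
  rw [this]
  exact tsum_eq_sum fun i hi => by
    simp [P.eq_empty i (Nat.le_of_not_gt (fun h => hi (Finset.mem_range.mpr h)))]

noncomputable def Prt.rsum (f : EuclideanSpace ℝ (Fin d) → E) (P : Prt A δ) : E :=
  ∑ i ∈ Finset.range P.n, (volume (P.S i)).toReal • f (P.c i)


lemma Prt.sub_est (hAb : IsBounded A) (f : EuclideanSpace ℝ (Fin d) → E)
    (P : Prt A δ) (Q : Prt A δ') (p : Seminorm ℝ E) {ε ε' : ℝ}
    (hP : ∀ i, ∀ x ∈ P.S i, p (f (P.c i) - f x) ≤ ε)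
    (hQ : ∀ j, ∀ x ∈ Q.S j, p (f (Q.c j) - f x) ≤ ε') :
    p (P.rsum f - Q.rsum f) ≤ (ε + ε') * (volume A).toReal := by
  classical
  set v : ℕ → ℕ → ℝ := fun i j => (volume (P.S i ∩ Q.S j)).toReal with hv
  have hfin : ∀ i j, volume (P.S i ∩ Q.S j) ≠ ⊤ := fun i j =>
    ((measure_mono (inter_subset_left.trans (P.subset i))).trans_lt
      (lt_top_iff_ne_top.mpr (vol_ne_top hAb))).ne
  have hvP : ∀ i, (volume (P.S i)).toReal = ∑ j ∈ Finset.range Q.n, v i j := by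
    intro i
    rw [P.vol_decomp Q i, ENNReal.toReal_sum (fun j _ => hfin i j)]
  have hvQ : ∀ j, (volume (Q.S j)).toReal = ∑ i ∈ Finset.range P.n, v i j := by
    intro j
    rw [Q.vol_decomp P j, ENNReal.toReal_sum (fun i _ => by
      rw [inter_comm]; exact hfin _ _)]
    exact Finset.sum_congr rfl fun i _ => by rw [hv]; rw [inter_comm]
  have hPsum : P.rsum f = ∑ i ∈ Finset.range P.n, ∑ j ∈ Finset.range Q.n,
      v i j • f (P.c i) := by
    refine Finset.sum_congr rfl fun i _ => ?_
    rw [hvP i, Finset.sum_smul]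
  have hQsum : Q.rsum f = ∑ i ∈ Finset.range P.n, ∑ j ∈ Finset.range Q.n,
      v i j • f (Q.c j) := by
    rw [Finset.sum_comm]
    refine Finset.sum_congr rfl fun j _ => ?_
    rw [hvQ j, Finset.sum_smul]
  rw [hPsum, hQsum, ← Finset.sum_sub_distrib]
  have : ∀ i ∈ Finset.range P.n,
      p (∑ j ∈ Finset.range Q.n, v i j • f (P.c i) -
        ∑ j ∈ Finset.range Q.n, v i j • f (Q.c j)) ≤
      ∑ j ∈ Finset.range Q.n, v i j * (ε + ε') := by
    intro i _
    rw [← Finset.sum_sub_distrib]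
    refine (seminorm_sum_le p _ _).trans (Finset.sum_le_sum fun j _ => ?_)
    rw [← smul_sub, map_smul_eq_mul, Real.norm_of_nonneg ENNReal.toReal_nonneg]
    rcases eq_or_ne (P.S i ∩ Q.S j) ∅ with h | h
    · simp [hv, h]
    · obtain ⟨x, hxP, hxQ⟩ := nonempty_iff_ne_empty.mpr h
      refine mul_le_mul_of_nonneg_left ?_ ENNReal.toReal_nonneg
      calc p (f (P.c i) - f (Q.c j))
          ≤ p (f (P.c i) - f x) + p (f x - f (Q.c j)) := by
            simpa using map_add_le_add p (f (P.c i) - f x) (f x - f (Q.c j))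
        _ ≤ ε + ε' := add_le_add (hP i x hxP) (by rw [map_sub_rev]; exact hQ j x hxQ)
  refine (seminorm_sum_le p _ _).trans ((Finset.sum_le_sum this).trans ?_)
  have hAtr : (volume A).toReal = ∑ i ∈ Finset.range P.n, (volume (P.S i)).toReal := by
    rw [P.vol_total, ENNReal.toReal_sum (fun i _ =>
      ((measure_mono (P.subset i)).trans_lt (lt_top_iff_ne_top.mpr (vol_ne_top hAb))).ne)]
  calc ∑ i ∈ Finset.range P.n, ∑ j ∈ Finset.range Q.n, v i j * (ε + ε')
      = ∑ i ∈ Finset.range P.n, (volume (P.S i)).toReal * (ε + ε') := by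
        refine Finset.sum_congr rfl fun i _ => ?_
        rw [← Finset.sum_mul, ← hvP i]
    _ = (ε + ε') * (volume A).toReal := by rw [← Finset.sum_mul, ← hAtr, mul_comm]
    _ ≤ (ε + ε') * (volume A).toReal := le_rfl

lemma Prt.vol_total_toReal (hAb : IsBounded A) (P : Prt A δ) :
    (volume A).toReal = ∑ i ∈ Finset.range P.n, (volume (P.S i)).toReal := by
  rw [P.vol_total, ENNReal.toReal_sum (fun i _ =>
    ((measure_mono (P.subset i)).trans_lt (lt_top_iff_ne_top.mpr (vol_ne_top hAb))).ne)]

lemma Prt.le_int (hAb : IsBounded A) (f : EuclideanSpace ℝ (Fin d) → E)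
    (P : Prt A δ) (p : Seminorm ℝ E)
    (hintp : IntegrableOn (fun x => p (f x)) A) {ε : ℝ}
    (hP : ∀ i, ∀ x ∈ P.S i, p (f (P.c i) - f x) ≤ ε) :
    p (P.rsum f) ≤ (∫ x in A, p (f x)) + ε * (volume A).toReal := by
  have hSfin : ∀ i, volume (P.S i) ≠ ⊤ := fun i =>
    ((measure_mono (P.subset i)).trans_lt (lt_top_iff_ne_top.mpr (vol_ne_top hAb))).ne
  have key : ∀ i ∈ Finset.range P.n,
      (volume (P.S i)).toReal * p (f (P.c i)) ≤
        (∫ x in P.S i, p (f x)) + ε * (volume (P.S i)).toReal := by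
    intro i _
    have hint1 : IntegrableOn (fun x => p (f x)) (P.S i) := hintp.mono_set (P.subset i)
    have hintc : IntegrableOn (fun _ => ε) (P.S i) :=
      integrableOn_const (hSfin i)
    have hconst : ∫ x in P.S i, p (f (P.c i)) = (volume (P.S i)).toReal * p (f (P.c i)) := by
      rw [setIntegral_const]; simp [smul_eq_mul, measureReal_def]
    rw [← hconst]
    calc ∫ x in P.S i, p (f (P.c i))
        ≤ ∫ x in P.S i, (p (f x) + ε) := by
          refine setIntegral_mono_on
            (integrableOn_const (hSfin i))
            (hint1.add hintc) (P.meas i) (fun x hx => ?_)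
          have e1 : f (P.c i) = f x + (f (P.c i) - f x) := by abel
          calc p (f (P.c i)) = p (f x + (f (P.c i) - f x)) := by rw [← e1]
            _ ≤ p (f x) + p (f (P.c i) - f x) := map_add_le_add p _ _
            _ ≤ p (f x) + ε := add_le_add_right (hP i x hx) _
      _ = (∫ x in P.S i, p (f x)) + ε * (volume (P.S i)).toReal := by
          rw [integral_add hint1 hintc, setIntegral_const]
          simp [smul_eq_mul, mul_comm, measureReal_def]
  calc p (P.rsum f)
      ≤ ∑ i ∈ Finset.range P.n, (volume (P.S i)).toReal * p (f (P.c i)) :=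
        (seminorm_sum_le p _ _).trans (le_of_eq (Finset.sum_congr rfl fun i _ => by
          rw [map_smul_eq_mul, Real.norm_of_nonneg ENNReal.toReal_nonneg]))
    _ ≤ ∑ i ∈ Finset.range P.n, ((∫ x in P.S i, p (f x)) + ε * (volume (P.S i)).toReal) :=
        Finset.sum_le_sum key
    _ = (∫ x in A, p (f x)) + ε * (volume A).toReal := by
        rw [Finset.sum_add_distrib, ← P.integral_decomp hintp, ← Finset.mul_sum,
          ← P.vol_total_toReal hAb]

lemma Prt.phi_est [TopologicalSpace E] (hAb : IsBounded A) (f : EuclideanSpace ℝ (Fin d) → E)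
    (P : Prt A δ) (φ : E →L[ℝ] ℝ)
    (hintφ : IntegrableOn (fun x => φ (f x)) A) {ε : ℝ}
    (hP : ∀ i, ∀ x ∈ P.S i, |φ (f (P.c i)) - φ (f x)| ≤ ε) :
    |φ (P.rsum f) - ∫ x in A, φ (f x)| ≤ ε * (volume A).toReal := by
  have hSfin : ∀ i, volume (P.S i) ≠ ⊤ := fun i =>
    ((measure_mono (P.subset i)).trans_lt (lt_top_iff_ne_top.mpr (vol_ne_top hAb))).ne
  have hphi : φ (P.rsum f) =
      ∑ i ∈ Finset.range P.n, (volume (P.S i)).toReal * φ (f (P.c i)) := by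
    simp only [Prt.rsum, map_sum, ContinuousLinearMap.map_smul, smul_eq_mul]
  rw [hphi, P.integral_decomp hintφ, ← Finset.sum_sub_distrib]
  refine (Finset.abs_sum_le_sum_abs _ _).trans ?_
  have key : ∀ i ∈ Finset.range P.n,
      |(volume (P.S i)).toReal * φ (f (P.c i)) - ∫ x in P.S i, φ (f x)| ≤
        ε * (volume (P.S i)).toReal := by
    intro i _
    have hint1 : IntegrableOn (fun x => φ (f x)) (P.S i) := hintφ.mono_set (P.subset i)
    have hintc : IntegrableOn (fun _ => φ (f (P.c i))) (P.S i) :=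
      integrableOn_const (hSfin i)
    have hconst : (volume (P.S i)).toReal * φ (f (P.c i)) =
        ∫ x in P.S i, φ (f (P.c i)) := by
      rw [setIntegral_const]; simp [smul_eq_mul, measureReal_def]
    rw [hconst, ← integral_sub hintc hint1]
    have habs : |∫ x in P.S i, (φ (f (P.c i)) - φ (f x))| ≤
        ∫ x in P.S i, |φ (f (P.c i)) - φ (f x)| := by
      simpa [Real.norm_eq_abs] using norm_integral_le_integral_norm
        (μ := volume.restrict (P.S i)) (fun x => φ (f (P.c i)) - φ (f x))
    refine habs.trans ?_
    calc ∫ x in P.S i, |φ (f (P.c i)) - φ (f x)|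
        ≤ ∫ x in P.S i, ε := by
          refine setIntegral_mono_on (hintc.sub hint1).abs
            (integrableOn_const (hSfin i))
            (P.meas i) (fun x hx => hP i x hx)
      _ = ε * (volume (P.S i)).toReal := by rw [setIntegral_const]; simp [smul_eq_mul, mul_comm, measureReal_def]
  refine (Finset.sum_le_sum key).trans (le_of_eq ?_)
  rw [← Finset.mul_sum, ← P.vol_total_toReal hAb]

end Part3

section Part4

variable {E : Type*} [AddCommGroup E] [Module ℝ E]
    [UniformSpace E] [IsUniformAddGroup E] [ContinuousSMul ℝ E]
    [LocallyConvexSpace ℝ E] [T2Space E] [CompleteSpace E]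
variable {d : ℕ}

lemma phi_seminorm (φ : E →L[ℝ] ℝ) :
    ∃ p : Seminorm ℝ E, Continuous ⇑p ∧ ∀ x, p x = |φ x| := by
  refine ⟨(normSeminorm ℝ ℝ).comp (φ : E →ₗ[ℝ] ℝ), ?_, fun x => ?_⟩
  · have : ⇑((normSeminorm ℝ ℝ).comp (φ : E →ₗ[ℝ] ℝ)) = fun x => ‖φ x‖ := rfl
    rw [this]
    exact continuous_norm.comp φ.continuous
  · simp [Seminorm.comp_apply, Real.norm_eq_abs]

lemma integrable_phi (f : EuclideanSpace ℝ (Fin d) → E) (hf : Continuous f)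
    (hint : ∀ p : Seminorm ℝ E, Continuous ⇑p → Integrable (fun x => p (f x)))
    (φ : E →L[ℝ] ℝ) : Integrable (fun x => φ (f x)) := by
  obtain ⟨p, hpc, hpe⟩ := phi_seminorm φ
  refine (hint p hpc).mono' ((φ.continuous.comp hf).aestronglyMeasurable) ?_
  filter_upwards with x
  rw [Real.norm_eq_abs, ← hpe]

lemma exists_setIntegral (f : EuclideanSpace ℝ (Fin d) → E) (hf : Continuous f)
    (hint : ∀ p : Seminorm ℝ E, Continuous ⇑p → Integrable (fun x => p (f x)))
    {A : Set (EuclideanSpace ℝ (Fin d))} (hA : MeasurableSet A) (hAb : IsBounded A) :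
    ∃ I : E, (∀ φ : E →L[ℝ] ℝ, (∫ x in A, φ (f x)) = φ I) ∧
      (∀ p : Seminorm ℝ E, Continuous ⇑p → p I ≤ ∫ x in A, p (f x)) := by
  classical
  have hPne : ∀ m : ℕ, Nonempty (Prt A (1/(m+1 : ℝ))) := fun m =>
    exists_prt hA hAb (by positivity)
  set P : ∀ m : ℕ, Prt A (1/(m+1 : ℝ)) := fun m => (hPne m).some with hPdef
  set u : ℕ → E := fun m => (P m).rsum f with hu
  have hK : IsCompact (closure A) := hAb.isCompact_closure
  set M := (volume A).toReal with hM
  have hM0 : 0 ≤ M := ENNReal.toReal_nonneg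
  have fine : ∀ (p : Seminorm ℝ E), Continuous ⇑p → ∀ ε : ℝ, 0 < ε → ∃ N : ℕ, ∀ m ≥ N,
      ∀ i, ∀ x ∈ (P m).S i, p (f ((P m).c i) - f x) ≤ ε := by
    intro p hpc ε hε
    obtain ⟨δ, hδ, hmod⟩ := seminorm_unifCont hK hf p hpc hε
    obtain ⟨N, hN⟩ := exists_nat_gt (1/δ)
    refine ⟨N, fun m hm i x hx => ?_⟩
    have hci : (P m).c i ∈ closure A := (P m).c_mem i ⟨x, hx⟩
    have hxA : x ∈ closure A := subset_closure ((P m).subset i hx)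
    have hdm : (1:ℝ)/δ < (m:ℝ) + 1 := by
      refine hN.trans_le ?_
      have : (N:ℝ) ≤ (m:ℝ) := by exact_mod_cast hm
      linarith
    have hmδ : (1:ℝ)/((m:ℝ)+1) < δ := by
      rw [div_lt_iff₀ (by positivity)]
      rw [div_lt_iff₀ hδ] at hdm
      linarith [hdm]
    have hdist : dist ((P m).c i) x < δ := by
      rw [dist_comm]
      exact ((P m).mem_ball i x hx).trans hmδ
    exact (hmod _ hci _ hxA hdist).le
  have hcau : CauchySeq u := by
    apply cauchySeq_of_forall_seminorm
    intro p hpc ε hε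
    have hε' : (0:ℝ) < ε / (2*(M+1)) := by positivity
    obtain ⟨N, hN⟩ := fine p hpc _ hε'
    refine ⟨N, fun k hk l hl => ?_⟩
    have hest := Prt.sub_est hAb f (P k) (P l) p (hN k hk) (hN l hl)
    calc p (u k - u l) ≤ (ε/(2*(M+1)) + ε/(2*(M+1))) * M := hest
      _ = ε * (M / (M+1)) := by field_simp; ring
      _ < ε := mul_lt_of_lt_one_right hε ((div_lt_one (by linarith)).mpr (by linarith))
  obtain ⟨I, hI⟩ := cauchySeq_tendsto_of_complete hcau
  refine ⟨I, ?_, ?_⟩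
  · intro φ
    obtain ⟨pφ, hpφc, hpφe⟩ := phi_seminorm φ
    have hintφ : IntegrableOn (fun x => φ (f x)) A :=
      (integrable_phi f hf hint φ).integrableOn
    have h1 : Tendsto (fun m => φ (u m)) atTop (𝓝 (φ I)) := (φ.continuous.tendsto I).comp hI
    have h2 : Tendsto (fun m => φ (u m)) atTop (𝓝 (∫ x in A, φ (f x))) := by
      rw [Metric.tendsto_atTop]
      intro ε hε
      have hε' : (0:ℝ) < ε/(M+1) := by positivity
      obtain ⟨N, hN⟩ := fine pφ hpφc _ hε'
      refine ⟨N, fun m hm => ?_⟩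
      have hb := Prt.phi_est hAb f (P m) φ hintφ (ε := ε/(M+1)) (fun i x hx => by
        rw [← map_sub φ, ← hpφe]
        exact hN m hm i x hx)
      rw [Real.dist_eq]
      calc |φ (u m) - ∫ x in A, φ (f x)| ≤ ε/(M+1) * M := hb
        _ = ε * (M/(M+1)) := by ring
        _ < ε := mul_lt_of_lt_one_right hε ((div_lt_one (by linarith)).mpr (by linarith))
    exact tendsto_nhds_unique h2 h1
  · intro p hpc
    have h1 : Tendsto (fun m => p (u m)) atTop (𝓝 (p I)) := (hpc.tendsto I).comp hI
    refine le_of_forall_pos_le_add (fun ε hε => ?_)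
    have hε' : (0:ℝ) < ε/(M+1) := by positivity
    obtain ⟨N, hN⟩ := fine p hpc _ hε'
    have hev : ∀ᶠ m in atTop, p (u m) ≤ (∫ x in A, p (f x)) + ε := by
      filter_upwards [eventually_ge_atTop N] with m hm
      have hest := Prt.le_int hAb f (P m) p ((hint p hpc).integrableOn) (hN m hm)
      refine hest.trans (add_le_add_right ?_ _)
      calc ε/(M+1) * M ≤ ε/(M+1) * (M+1) := by
            refine mul_le_mul_of_nonneg_left (by linarith) (le_of_lt hε')
        _ = ε := div_mul_cancel₀ ε (by linarith)
    exact le_of_tendsto h1 hev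

end Part4

/-- Existence of the Pettis integral of a continuous function into a complete lcHs
whose composition with every continuous seminorm is integrable, together with the
seminorm bound on the integral. -/
theorem stmt5 (d : ℕ) {E : Type*} [AddCommGroup E] [Module ℝ E]
    [UniformSpace E] [IsUniformAddGroup E] [ContinuousSMul ℝ E]
    [LocallyConvexSpace ℝ E] [T2Space E] [CompleteSpace E]
    (f : EuclideanSpace ℝ (Fin d) → E) (hf : Continuous f)
    (hint : ∀ p : Seminorm ℝ E, Continuous ⇑p → Integrable (fun x => p (f x))) :
    ∃ e : E,
      (∀ φ : E →L[ℝ] ℝ,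
        Integrable (fun x => φ (f x)) ∧ (∫ x, φ (f x)) = φ e) ∧
      (∀ p : Seminorm ℝ E, Continuous ⇑p → p e ≤ ∫ x, p (f x)) := by
  classical
  set B : ℕ → Set (EuclideanSpace ℝ (Fin d)) :=
    fun n => Metric.closedBall (0:EuclideanSpace ℝ (Fin d)) n with hB
  have hBmeas : ∀ n, MeasurableSet (B n) := fun n => measurableSet_closedBall
  have hBbdd : ∀ n, IsBounded (B n) := fun n => isBounded_closedBall
  have hBmono : Monotone B := fun a b hab =>
    closedBall_subset_closedBall (by exact_mod_cast hab)
  have hBU : (⋃ n, B n) = univ := by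
    apply eq_univ_of_forall
    intro x
    obtain ⟨n, hn⟩ := exists_nat_ge ‖x‖
    exact mem_iUnion.mpr ⟨n, by simpa [hB, mem_closedBall_zero_iff] using hn⟩
  have hchoice : ∀ n : ℕ, ∃ I : E, (∀ φ : E →L[ℝ] ℝ, (∫ x in B n, φ (f x)) = φ I) ∧
      (∀ p : Seminorm ℝ E, Continuous ⇑p → p I ≤ ∫ x in B n, p (f x)) :=
    fun n => exists_setIntegral f hf hint (hBmeas n) (hBbdd n)
  choose I hIφ hIp using hchoice
  have hdiff : ∀ {k l : ℕ}, k ≤ l → ∀ p : Seminorm ℝ E, Continuous ⇑p →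
      p (I l - I k) ≤ (∫ x in B l, p (f x)) - ∫ x in B k, p (f x) := by
    intro k l hkl p hpc
    obtain ⟨J, hJφ, hJp⟩ := exists_setIntegral f hf hint
      ((hBmeas l).diff (hBmeas k)) ((hBbdd l).subset diff_subset)
    have hIJ : I l - I k = J := by
      by_contra hne
      obtain ⟨φ, hφ⟩ := SeparatingDual.exists_separating_of_ne (R := ℝ) hne
      apply hφ
      have hintφ := integrable_phi f hf hint φ
      have e1 : φ (I l) - φ (I k) = ∫ x in B l \ B k, φ (f x) := by
        rw [← hIφ l φ, ← hIφ k φ,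
          integral_diff (hBmeas k) hintφ.integrableOn (hBmono hkl)]
      rw [map_sub, e1, hJφ φ]
    rw [hIJ]
    refine (hJp p hpc).trans (le_of_eq ?_)
    rw [integral_diff (hBmeas k) (hint p hpc).integrableOn (hBmono hkl)]
  have hTp : ∀ p : Seminorm ℝ E, Continuous ⇑p →
      Tendsto (fun n => ∫ x in B n, p (f x)) atTop (𝓝 (∫ x, p (f x))) := by
    intro p hpc
    have := tendsto_setIntegral_of_monotone hBmeas hBmono
      (by rw [hBU]; exact (hint p hpc).integrableOn)
    rwa [hBU, setIntegral_univ] at this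
  have hle : ∀ (p : Seminorm ℝ E), Continuous ⇑p → ∀ n,
      (∫ x in B n, p (f x)) ≤ ∫ x, p (f x) := fun p hpc n =>
    setIntegral_le_integral (hint p hpc) (Eventually.of_forall fun x => apply_nonneg p _)
  have hcau : CauchySeq I := by
    apply cauchySeq_of_forall_seminorm
    intro p hpc ε hε
    obtain ⟨N, hN⟩ := (Metric.tendsto_atTop.mp (hTp p hpc)) ε hε
    refine ⟨N, fun k hk l hl => ?_⟩
    have key : ∀ a b : ℕ, N ≤ a → a ≤ b → p (I b - I a) < ε := by
      intro a b ha hab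
      refine lt_of_le_of_lt (hdiff hab p hpc) ?_
      have h1 := hN a ha
      rw [Real.dist_eq, abs_lt] at h1
      have h2 := hle p hpc b
      linarith [h1.1, h1.2]
    rcases le_total k l with h | h
    · rw [map_sub_rev]
      exact key k l hk h
    · exact key l k hl h
  obtain ⟨e, he⟩ := cauchySeq_tendsto_of_complete hcau
  refine ⟨e, fun φ => ⟨integrable_phi f hf hint φ, ?_⟩, fun p hpc => ?_⟩
  · have h1 : Tendsto (fun n => φ (I n)) atTop (𝓝 (φ e)) := (φ.continuous.tendsto e).comp he
    have h2 : Tendsto (fun n => φ (I n)) atTop (𝓝 (∫ x, φ (f x))) := by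
      have h3 := tendsto_setIntegral_of_monotone hBmeas hBmono
        (by rw [hBU]; exact (integrable_phi f hf hint φ).integrableOn)
      rw [hBU, setIntegral_univ] at h3
      exact Tendsto.congr (fun n => hIφ n φ) h3
    exact tendsto_nhds_unique h2 h1
  · have h1 : Tendsto (fun n => p (I n)) atTop (𝓝 (p e)) := (hpc.tendsto e).comp he
    exact le_of_tendsto h1 (Eventually.of_forall fun n => (hIp n p hpc).trans (hle p hpc n))
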